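/- For all a > 0, x > 0 and t > 0, one has e^{−x − a t} + ∫_0^t e^{−x − a z} · (∑_{j=1}^∞ (x a)^j z^{j−1} / (j! (j−1)!)) · e^{−a(t−z)} dz = e^{−x − a t} · ∑_{j=0}^∞ (x a t)^j / (j!)². (This gives the transition density l_g(x,t) = e^{−x−at} W_{1,1}(xat) of the inverse of the compound Poisson subordinator with exponential jumps, where W_{1,1} is the Wright function W_{1,1}(z) = ∑_{j=0}^∞ z^j/(j!)².) -/

import Mathlib

open MeasureTheory

lemma wright_summable (r : ℝ) (hr : 0 ≤ r) :
    Summable (fun j : ℕ => r ^ j / ((Nat.factorial j : ℝ)) ^ 2) := by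
  refine Summable.of_nonneg_of_le (fun j => by positivity) (fun j => ?_)
    (Real.summable_pow_div_factorial r)
  have h1 : (1:ℝ) ≤ (Nat.factorial j : ℝ) := by
    exact_mod_cast Nat.one_le_iff_ne_zero.mpr (Nat.factorial_ne_zero j)
  have h2 : (Nat.factorial j : ℝ) ≤ ((Nat.factorial j : ℝ))^2 := by nlinarith
  exact div_le_div_of_nonneg_left (by positivity) (by positivity) h2

theorem stmt15 (a x t : ℝ) (ha : 0 < a) (hx : 0 < x) (ht : 0 < t) :
    Real.exp (-x - a * t) +
      (∫ z in (0:ℝ)..t,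
        Real.exp (-x - a * z) *
          (∑' j : ℕ, (x * a) ^ (j + 1) * z ^ j /
            ((Nat.factorial (j + 1) : ℝ) * (Nat.factorial j : ℝ))) *
          Real.exp (-a * (t - z)))
      = Real.exp (-x - a * t) * ∑' j : ℕ, (x * a * t) ^ j / ((Nat.factorial j : ℝ)) ^ 2 := by
  set r := x * a * t with hr
  have hxa : 0 < x * a := mul_pos hx ha
  have hrpos : 0 < r := mul_pos hxa ht
  have hstep1 : (∫ z in (0:ℝ)..t,
        Real.exp (-x - a * z) *
          (∑' j : ℕ, (x * a) ^ (j + 1) * z ^ j /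
            ((Nat.factorial (j + 1) : ℝ) * (Nat.factorial j : ℝ))) *
          Real.exp (-a * (t - z)))
      = Real.exp (-x - a * t) * ∫ z in (0:ℝ)..t,
          (∑' j : ℕ, (x * a) ^ (j + 1) * z ^ j /
            ((Nat.factorial (j + 1) : ℝ) * (Nat.factorial j : ℝ))) := by
    rw [← intervalIntegral.integral_const_mul]
    apply intervalIntegral.integral_congr
    intro z _
    simp only
    have h : -x - a * z + -a * (t - z) = -x - a * t := by ring
    rw [mul_right_comm, ← Real.exp_add, h]
  have hsum : Summable (fun j : ℕ => r ^ (j+1) / (Nat.factorial (j+1) : ℝ)) :=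
    (Real.summable_pow_div_factorial r).comp_injective Nat.succ_injective
  have hbound : ∀ j : ℕ,
      (∫⁻ z in Set.Ioc (0:ℝ) t,
        ‖(x * a) ^ (j + 1) * z ^ j /
            ((Nat.factorial (j + 1) : ℝ) * (Nat.factorial j : ℝ))‖₊)
      ≤ ENNReal.ofReal (r ^ (j+1) / (Nat.factorial (j+1) : ℝ)) := by
    intro j
    have h1 : (1:ℝ) ≤ (Nat.factorial j : ℝ) := by
      exact_mod_cast Nat.one_le_iff_ne_zero.mpr (Nat.factorial_ne_zero j)
    have hfpos : (0:ℝ) < (Nat.factorial (j+1) : ℝ) := by positivity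
    set C : ℝ := (x * a) ^ (j + 1) * t ^ j /
        ((Nat.factorial (j + 1) : ℝ) * (Nat.factorial j : ℝ)) with hC
    have hCpos : 0 ≤ C := by rw [hC]; positivity
    calc (∫⁻ z in Set.Ioc (0:ℝ) t,
        ‖(x * a) ^ (j + 1) * z ^ j /
            ((Nat.factorial (j + 1) : ℝ) * (Nat.factorial j : ℝ))‖₊)
        ≤ ∫⁻ _ in Set.Ioc (0:ℝ) t, ENNReal.ofReal C := by
          apply setLIntegral_mono (by measurability)
          intro z hz
          rw [← enorm_eq_nnnorm, Real.enorm_eq_ofReal_abs]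
          apply ENNReal.ofReal_le_ofReal
          have hz0 : 0 ≤ z := le_of_lt hz.1
          rw [abs_of_nonneg (div_nonneg (mul_nonneg (by positivity) (pow_nonneg hz0 j)) (by positivity))]
          have : z ^ j ≤ t ^ j := pow_le_pow_left₀ hz0 hz.2 j
          rw [hC]
          gcongr
      _ = ENNReal.ofReal C * ENNReal.ofReal t := by
          rw [setLIntegral_const, Real.volume_Ioc, sub_zero]
      _ = ENNReal.ofReal (C * t) := (ENNReal.ofReal_mul hCpos).symm
      _ ≤ ENNReal.ofReal (r ^ (j+1) / (Nat.factorial (j+1) : ℝ)) := by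
          apply ENNReal.ofReal_le_ofReal
          have heq : C * t = r ^ (j+1) /
              ((Nat.factorial (j + 1) : ℝ) * (Nat.factorial j : ℝ)) := by
            rw [hC, hr]; ring
          rw [heq]
          exact div_le_div_of_nonneg_left (by positivity) hfpos (by nlinarith)
  have hint : (∫ z in (0:ℝ)..t,
        (∑' j : ℕ, (x * a) ^ (j + 1) * z ^ j /
            ((Nat.factorial (j + 1) : ℝ) * (Nat.factorial j : ℝ))))
      = ∑' j : ℕ, r ^ (j+1) / ((Nat.factorial (j+1) : ℝ)) ^ 2 := by
    rw [intervalIntegral.integral_of_le ht.le]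
    rw [MeasureTheory.integral_tsum (fun j => (by fun_prop : Continuous fun z : ℝ => (x * a) ^ (j + 1) * z ^ j / ((Nat.factorial (j + 1) : ℝ) * (Nat.factorial j : ℝ))).aestronglyMeasurable) ?fin]
    case fin =>
      refine ne_of_lt (lt_of_le_of_lt (ENNReal.tsum_le_tsum hbound) ?_)
      rw [← ENNReal.ofReal_tsum_of_nonneg (fun j => by positivity) hsum]
      exact ENNReal.ofReal_lt_top
    congr 1
    funext j
    rw [← intervalIntegral.integral_of_le ht.le]
    have hre : ∀ z : ℝ, (x * a) ^ (j + 1) * z ^ j /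
        ((Nat.factorial (j + 1) : ℝ) * (Nat.factorial j : ℝ))
        = ((x * a) ^ (j + 1) /
        ((Nat.factorial (j + 1) : ℝ) * (Nat.factorial j : ℝ))) * z ^ j := fun z => by ring
    simp_rw [hre]
    rw [intervalIntegral.integral_const_mul, integral_pow]
    have hfact : ((Nat.factorial (j+1) : ℝ)) = (j+1) * (Nat.factorial j : ℝ) := by
      push_cast [Nat.factorial_succ]; ring
    have hf0 : (Nat.factorial j : ℝ) ≠ 0 := by positivity
    have hj1 : ((j:ℝ)+1) ≠ 0 := by positivity
    rw [hr, hfact]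
    rw [zero_pow (Nat.succ_ne_zero j), sub_zero]
    field_simp
    ring
  have hshift : (∑' j : ℕ, r ^ j / ((Nat.factorial j : ℝ)) ^ 2)
      = 1 + ∑' j : ℕ, r ^ (j+1) / ((Nat.factorial (j+1) : ℝ)) ^ 2 := by
    rw [Summable.tsum_eq_zero_add (wright_summable r hrpos.le)]
    norm_num
  rw [hstep1, hint, hshift]
  ring
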